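/- In the category of groupoids, every isofibration has the right lifting property with respect to every functor that is both an equivalence and injective on objects. -/

import Mathlib

open CategoryTheory

/-- A functor is an isofibration if every isomorphism with source in its image
lifts to an isomorphism with prescribed source. -/
def IsIsofibration {A B : Type*} [Category A] [Category B] (F : A ⥤ B) : Prop :=
  ∀ (a : A) (b : B) (e : F.obj a ≅ b), ∃ (a' : A) (α : a ≅ a') (h : F.obj a' = b),
    F.map α.hom ≫ eqToHom h = e.hom

/-- In the category of groupoids, every isofibration has the right lifting
property with respect to every injective-on-objects equivalence. -/
theorem isofibration_rlp_injective_equivalence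
    {E D : Grpd} (p : E ⟶ D) (hfib : IsIsofibration p) :
    ∀ {A B : Grpd} (i : A ⟶ B), Function.Injective i.obj → i.IsEquivalence →
      HasLiftingProperty i p := by
  intro A B i hinj hequiv
  haveI := hequiv
  constructor
  intro f g sq
  -- the square commutes on objects
  have hsq : ∀ a : A, p.obj (f.obj a) = g.obj (i.obj a) := fun a =>
    Functor.congr_obj sq.w a
  -- choose the data of the lift on objects
  have hdata : ∀ b : (B : Type _), ∃ (a : A) (L : E) (ε : i.obj a ≅ b)
      (β : f.obj a ≅ L) (hb : p.obj L = g.obj b),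
      (p.map β.hom ≫ eqToHom hb = eqToHom (hsq a) ≫ g.map ε.hom) ∧
      (∀ a₀ : A, i.obj a₀ = b →
        a = a₀ ∧ (∃ hε : i.obj a = b, ε.hom = eqToHom hε) ∧
        (∃ hL : f.obj a = L, β.hom = eqToHom hL)) := by
    intro b
    by_cases h : ∃ a : A, i.obj a = b
    · obtain ⟨a, ha⟩ := h
      refine ⟨a, f.obj a, eqToIso ha, Iso.refl _,
        (hsq a).trans (congrArg g.obj ha), ?_, ?_⟩
      · simp [eqToHom_map]
      · intro a₀ h₀
        exact ⟨hinj (ha.trans h₀.symm), ⟨ha, rfl⟩, ⟨rfl, rfl⟩⟩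
    · obtain ⟨a, ε⟩ : ∃ a : A, Nonempty (i.obj a ≅ b) :=
        ⟨i.objPreimage b, ⟨i.objObjPreimageIso b⟩⟩
      obtain ⟨ε⟩ := ε
      obtain ⟨L, β, hb, hcomp⟩ :=
        hfib (f.obj a) (g.obj b) (eqToIso (hsq a) ≪≫ g.mapIso ε)
      refine ⟨a, L, ε, β, hb, by simpa using hcomp, fun a₀ h₀ => absurd ⟨a₀, h₀⟩ h⟩
  choose R L ε β hb hcomp hstrict using hdata
  -- the lift on morphisms
  let Rmap : ∀ {b b' : (B : Type _)}, (b ⟶ b') → (R b ⟶ R b') := fun {b b'} φ =>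
    i.preimage ((ε b).hom ≫ φ ≫ (ε b').inv)
  have hRmap : ∀ {b b' : (B : Type _)} (φ : b ⟶ b'),
      i.map (Rmap φ) = (ε b).hom ≫ φ ≫ (ε b').inv := fun φ =>
    i.map_preimage _
  let l : (B : Type _) ⥤ (E : Type _) :=
    { obj := L
      map := fun {b b'} φ => (β b).inv ≫ f.map (Rmap φ) ≫ (β b').hom
      map_id := fun b => by
        have : Rmap (𝟙 b) = 𝟙 (R b) := by
          apply i.map_injective
          rw [hRmap]
          simp
        rw [this]; simp
      map_comp := fun {b b' b''} φ ψ => by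
        have : Rmap (φ ≫ ψ) = Rmap φ ≫ Rmap ψ := by
          apply i.map_injective
          rw [Functor.map_comp, hRmap, hRmap, hRmap]
          simp
        rw [this]; simp }
  refine ⟨⟨⟨l, ?_, ?_⟩⟩⟩
  · -- i ≫ l = f
    show ((i : (A : Type _) ⥤ (B : Type _)) ⋙ l : (A : Type _) ⥤ (E : Type _)) = (f : (A : Type _) ⥤ (E : Type _))
    have hobj : ∀ a : A, L (i.obj a) = f.obj a := fun a => by
      obtain ⟨ha, _, hL, hβ⟩ := hstrict (i.obj a) a rfl
      rw [← hL, ha]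
    fapply CategoryTheory.Functor.ext
    · exact hobj
    · intro a a' ψ
      obtain ⟨ha, ⟨hε, hεe⟩, ⟨hL, hβe⟩⟩ := hstrict (i.obj a) a rfl
      obtain ⟨ha', ⟨hε', hεe'⟩, ⟨hL', hβe'⟩⟩ := hstrict (i.obj a') a' rfl
      have hβ : β (i.obj a) = eqToIso hL := Iso.ext hβe
      have hβ' : β (i.obj a') = eqToIso hL' := Iso.ext hβe'
      have hε2 : ε (i.obj a) = eqToIso hε := Iso.ext hεe
      have hε2' : ε (i.obj a') = eqToIso hε' := Iso.ext hεe'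
      have hR : Rmap (i.map ψ) = eqToHom ha ≫ ψ ≫ eqToHom ha'.symm := by
        apply i.map_injective
        rw [hRmap, hε2, hε2']
        simp [eqToHom_map]
      show (β (i.obj a)).inv ≫ f.map (Rmap (i.map ψ)) ≫ (β (i.obj a')).hom = _
      rw [hR, hβ, hβ']
      simp [eqToHom_map]
  · -- l ≫ p = g
    show (l ⋙ (p : (E : Type _) ⥤ (D : Type _)) : (B : Type _) ⥤ (D : Type _)) = (g : (B : Type _) ⥤ (D : Type _))
    fapply CategoryTheory.Functor.ext
    · exact hb
    · intro b b' φ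
      have hfp : ∀ {a a' : A} (ψ : a ⟶ a'), p.map (f.map ψ) =
          eqToHom (hsq a) ≫ g.map (i.map ψ) ≫ eqToHom (hsq a').symm := by
        intro a a' ψ
        exact Functor.congr_hom sq.w ψ
      have hβinv : ∀ b : (B : Type _), p.map (β b).inv =
          eqToHom (hb b) ≫ g.map (ε b).inv ≫ eqToHom (hsq (R b)).symm := by
        intro b
        rw [← cancel_mono (p.map (β b).hom), ← p.map_comp]
        have h2 := hcomp b
        rw [comp_eqToHom_iff] at h2
        rw [h2]
        simp
      show p.map ((β b).inv ≫ f.map (Rmap φ) ≫ (β b').hom) = _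
      have h2 := hcomp b'
      rw [comp_eqToHom_iff] at h2
      rw [p.map_comp, p.map_comp, hβinv, hfp, h2, hRmap]
      simp
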